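/- The function X ↦ tr(X^{-1}) on symmetric positive definite n×n matrices is geodesically convex with respect to the Killing metric: for all positive definite X, Y and s ∈ [0,1], tr(γ(s)^{-1}) ≤ (1-s) tr(X^{-1}) + s tr(Y^{-1}), where γ(s) = X^{1/2}(X^{-1/2}YX^{-1/2})^s X^{1/2}. -/

import Mathlib

open Matrix

/-- Real power of a symmetric (Hermitian) real matrix, defined through the
spectral decomposition; on non-Hermitian input we return the matrix itself. -/
noncomputable def mpow {n : ℕ} (A : Matrix (Fin n) (Fin n) ℝ) (s : ℝ) :
    Matrix (Fin n) (Fin n) ℝ :=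
  if hA : A.IsHermitian then
    (hA.eigenvectorUnitary : Matrix (Fin n) (Fin n) ℝ) *
      Matrix.diagonal (fun i => (hA.eigenvalues i) ^ s) *
      (star (hA.eigenvectorUnitary : Matrix (Fin n) (Fin n) ℝ))
  else A

/-- Matrix logarithm of a symmetric real matrix via spectral decomposition. -/
noncomputable def mlog {n : ℕ} (A : Matrix (Fin n) (Fin n) ℝ) :
    Matrix (Fin n) (Fin n) ℝ :=
  if hA : A.IsHermitian then
    (hA.eigenvectorUnitary : Matrix (Fin n) (Fin n) ℝ) *
      Matrix.diagonal (fun i => Real.log (hA.eigenvalues i)) *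
      (star (hA.eigenvectorUnitary : Matrix (Fin n) (Fin n) ℝ))
  else A

/-- The geodesic `s ↦ X^{1/2} (X^{-1/2} Y X^{-1/2})^s X^{1/2}` in the manifold of
positive definite matrices with the trace-type Killing metric. -/
noncomputable def geodesicPD {n : ℕ} (X Y : Matrix (Fin n) (Fin n) ℝ) (s : ℝ) :
    Matrix (Fin n) (Fin n) ℝ :=
  mpow X (1 / 2) * mpow (mpow X (-(1 / 2)) * Y * mpow X (-(1 / 2))) s * mpow X (1 / 2)

section Aux

variable {n : ℕ}

lemma mpow_eq {A : Matrix (Fin n) (Fin n) ℝ} (hA : A.IsHermitian) (s : ℝ) :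
    mpow A s = (hA.eigenvectorUnitary : Matrix (Fin n) (Fin n) ℝ) *
      Matrix.diagonal (fun i => (hA.eigenvalues i) ^ s) *
      (star (hA.eigenvectorUnitary : Matrix (Fin n) (Fin n) ℝ)) := dif_pos hA

lemma mpow_isHermitian {A : Matrix (Fin n) (Fin n) ℝ} (hA : A.IsHermitian) (s : ℝ) :
    (mpow A s).IsHermitian := by
  rw [mpow_eq hA s]
  show _ᴴ = _
  simp [Matrix.conjTranspose_mul, Matrix.diagonal_conjTranspose, mul_assoc,
    Matrix.star_eq_conjTranspose]

lemma mpow_mul_mpow {A : Matrix (Fin n) (Fin n) ℝ} (hA : A.PosDef) (s t : ℝ) :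
    mpow A s * mpow A t = mpow A (s + t) := by
  have h1 : (star (hA.1.eigenvectorUnitary : Matrix (Fin n) (Fin n) ℝ)) *
      (hA.1.eigenvectorUnitary : Matrix (Fin n) (Fin n) ℝ) = 1 :=
    Unitary.coe_star_mul_self _
  rw [mpow_eq hA.1 s, mpow_eq hA.1 t, mpow_eq hA.1 (s + t)]
  have hd : (Matrix.diagonal (fun i => (hA.1.eigenvalues i) ^ s)) *
      (Matrix.diagonal (fun i => (hA.1.eigenvalues i) ^ t)) =
      Matrix.diagonal (fun i => (hA.1.eigenvalues i) ^ (s + t)) := by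
    rw [Matrix.diagonal_mul_diagonal]
    exact congrArg Matrix.diagonal
      (funext fun i => (Real.rpow_add (hA.eigenvalues_pos i) s t).symm)
  calc (hA.1.eigenvectorUnitary : Matrix (Fin n) (Fin n) ℝ) *
        Matrix.diagonal (fun i => (hA.1.eigenvalues i) ^ s) *
        (star (hA.1.eigenvectorUnitary : Matrix (Fin n) (Fin n) ℝ)) *
        ((hA.1.eigenvectorUnitary : Matrix (Fin n) (Fin n) ℝ) *
        Matrix.diagonal (fun i => (hA.1.eigenvalues i) ^ t) *
        (star (hA.1.eigenvectorUnitary : Matrix (Fin n) (Fin n) ℝ)))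
      = (hA.1.eigenvectorUnitary : Matrix (Fin n) (Fin n) ℝ) *
        Matrix.diagonal (fun i => (hA.1.eigenvalues i) ^ s) *
        ((star (hA.1.eigenvectorUnitary : Matrix (Fin n) (Fin n) ℝ)) *
        (hA.1.eigenvectorUnitary : Matrix (Fin n) (Fin n) ℝ)) *
        Matrix.diagonal (fun i => (hA.1.eigenvalues i) ^ t) *
        (star (hA.1.eigenvectorUnitary : Matrix (Fin n) (Fin n) ℝ)) := by
        simp only [mul_assoc]
    _ = _ := by
        rw [h1, mul_one,
          mul_assoc (hA.1.eigenvectorUnitary : Matrix (Fin n) (Fin n) ℝ)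
            (Matrix.diagonal _) (Matrix.diagonal _), hd]

lemma mpow_zero {A : Matrix (Fin n) (Fin n) ℝ} (hA : A.IsHermitian) :
    mpow A 0 = 1 := by
  rw [mpow_eq hA 0]
  simp only [Real.rpow_zero, Matrix.diagonal_one, mul_one]
  exact Unitary.coe_mul_star_self _

lemma mpow_one {A : Matrix (Fin n) (Fin n) ℝ} (hA : A.IsHermitian) :
    mpow A 1 = A := by
  rw [mpow_eq hA 1]
  simp only [Real.rpow_one]
  conv_rhs => rw [hA.spectral_theorem]
  congr

lemma mpow_neg_eq_inv {A : Matrix (Fin n) (Fin n) ℝ} (hA : A.PosDef) (s : ℝ) :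
    (mpow A s)⁻¹ = mpow A (-s) := by
  apply Matrix.inv_eq_right_inv
  rw [mpow_mul_mpow hA, add_neg_cancel, mpow_zero hA.1]

lemma inv_eq_mpow_neg_one {A : Matrix (Fin n) (Fin n) ℝ} (hA : A.PosDef) :
    A⁻¹ = mpow A (-1) := by
  apply Matrix.inv_eq_right_inv
  nth_rewrite 1 [← mpow_one hA.1]
  rw [mpow_mul_mpow hA, add_neg_cancel, mpow_zero hA.1]

lemma trace_nonneg_of_posSemidef {A : Matrix (Fin n) (Fin n) ℝ} (hA : A.PosSemidef) :
    0 ≤ A.trace := by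
  exact hA.trace_nonneg

lemma scalar_ineq {a s : ℝ} (ha : 0 < a) (hs0 : 0 ≤ s) (hs1 : s ≤ 1) :
    a ^ (-s) ≤ (1 - s) * 1 + s * a ^ (-1 : ℝ) := by
  have h1 : a ^ (-s) = (1 : ℝ) ^ (1 - s) * (a⁻¹) ^ s := by
    rw [Real.one_rpow, one_mul, Real.inv_rpow ha.le, ← Real.rpow_neg ha.le]
  have h2 : a ^ (-1 : ℝ) = a⁻¹ := Real.rpow_neg_one a
  rw [h1, h2]
  exact Real.geom_mean_le_arith_mean2_weighted (by linarith) hs0 zero_le_one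
    (inv_nonneg.mpr ha.le) (by ring)

lemma posDef_conj {A B C : Matrix (Fin n) (Fin n) ℝ} (hA : A.PosDef)
    (hCB : C * B = 1) : (Bᴴ * A * B).PosDef := by
  refine Matrix.PosDef.of_dotProduct_mulVec_pos (Matrix.isHermitian_conjTranspose_mul_mul B hA.1) fun x hx => ?_
  have hx' : B *ᵥ x ≠ 0 := by
    intro h
    apply hx
    calc x = (1 : Matrix (Fin n) (Fin n) ℝ) *ᵥ x := (Matrix.one_mulVec x).symm
    _ = C *ᵥ (B *ᵥ x) := by rw [← hCB, ← Matrix.mulVec_mulVec]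
    _ = 0 := by rw [h, Matrix.mulVec_zero]
  have := hA.dotProduct_mulVec_pos hx'
  simpa only [Matrix.star_mulVec, Matrix.dotProduct_mulVec, Matrix.vecMul_vecMul] using this

end Aux

/-- Geodesic convexity of `X ↦ tr(X⁻¹)` with respect to the Killing metric on
positive definite matrices. -/
theorem trace_inv_geodesic_convex (n : ℕ) (X Y : Matrix (Fin n) (Fin n) ℝ)
    (hX : X.PosDef) (hY : Y.PosDef) :
    ∀ s ∈ Set.Icc (0 : ℝ) 1,
      ((geodesicPD X Y s)⁻¹).trace ≤ (1 - s) * (X⁻¹).trace + s * (Y⁻¹).trace := by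
  intro s hs
  obtain ⟨hs0, hs1⟩ := hs
  classical
  set P : Matrix (Fin n) (Fin n) ℝ := mpow X (1 / 2) with hPdef
  set Q : Matrix (Fin n) (Fin n) ℝ := mpow X (-(1 / 2)) with hQdef
  have hPQ : P * Q = 1 := by
    rw [hPdef, hQdef, mpow_mul_mpow hX]
    rw [show (1 / 2 : ℝ) + -(1 / 2) = 0 by norm_num, mpow_zero hX.1]
  have hQP : Q * P = 1 := by
    rw [hPdef, hQdef, mpow_mul_mpow hX]
    rw [show (-(1 / 2) : ℝ) + 1 / 2 = 0 by norm_num, mpow_zero hX.1]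
  have hQH : Q.IsHermitian := mpow_isHermitian hX.1 _
  set M : Matrix (Fin n) (Fin n) ℝ := Q * Y * Q with hMdef
  have hMpd : M.PosDef := by
    have h := posDef_conj (B := Q) (C := P) hY hPQ
    rwa [hQH.eq] at h
  have hPinv : P⁻¹ = Q := Matrix.inv_eq_right_inv hPQ
  have hQinv : Q⁻¹ = P := Matrix.inv_eq_right_inv hQP
  have hγ : geodesicPD X Y s = P * mpow M s * P := rfl
  have hγinv : (geodesicPD X Y s)⁻¹ = Q * mpow M (-s) * Q := by
    rw [hγ, Matrix.mul_inv_rev, Matrix.mul_inv_rev, hPinv, mpow_neg_eq_inv hMpd, mul_assoc]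
  -- the eigenvalue data of M
  have hg : ∀ i, (0:ℝ) ≤ (1 - s) * (hMpd.1.eigenvalues i ^ (0:ℝ)) +
      s * (hMpd.1.eigenvalues i ^ (-1:ℝ)) - hMpd.1.eigenvalues i ^ (-s) := by
    intro i
    have h1 := scalar_ineq (hMpd.eigenvalues_pos i) hs0 hs1
    rw [Real.rpow_zero]
    linarith
  set g : Fin n → ℝ := fun i => (1 - s) * (hMpd.1.eigenvalues i ^ (0:ℝ)) +
      s * (hMpd.1.eigenvalues i ^ (-1:ℝ)) - hMpd.1.eigenvalues i ^ (-s) with hgdef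
  set U : Matrix (Fin n) (Fin n) ℝ := (hMpd.1.eigenvectorUnitary : Matrix (Fin n) (Fin n) ℝ)
    with hUdef
  have hdiff : (1 - s) • (1 : Matrix (Fin n) (Fin n) ℝ) + s • M⁻¹ - mpow M (-s)
      = U * Matrix.diagonal g * star U := by
    have e0 : (1 : Matrix (Fin n) (Fin n) ℝ) =
        U * Matrix.diagonal (fun i => hMpd.1.eigenvalues i ^ (0:ℝ)) * star U := by
      rw [← mpow_eq hMpd.1 0, mpow_zero hMpd.1]
    have e1 : M⁻¹ = U * Matrix.diagonal (fun i => hMpd.1.eigenvalues i ^ (-1:ℝ)) * star U := by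
      rw [← mpow_eq hMpd.1 (-1), inv_eq_mpow_neg_one hMpd]
    have e2 : mpow M (-s) = U * Matrix.diagonal (fun i => hMpd.1.eigenvalues i ^ (-s)) * star U :=
      mpow_eq hMpd.1 (-s)
    have e3 : Matrix.diagonal g = (1 - s) • Matrix.diagonal (fun i => hMpd.1.eigenvalues i ^ (0:ℝ))
        + s • Matrix.diagonal (fun i => hMpd.1.eigenvalues i ^ (-1:ℝ))
        - Matrix.diagonal (fun i => hMpd.1.eigenvalues i ^ (-s)) := by
      rw [← Matrix.diagonal_smul, ← Matrix.diagonal_smul, Matrix.diagonal_add,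
        Matrix.diagonal_sub]
      refine congrArg Matrix.diagonal (funext fun i => ?_)
      simp [hgdef, smul_eq_mul]
    rw [e0, e1, e2, e3]
    simp only [Matrix.mul_add, Matrix.add_mul, Matrix.mul_sub, Matrix.sub_mul,
      Matrix.mul_smul, Matrix.smul_mul]
  have hPSDdiff : ((1 - s) • (1 : Matrix (Fin n) (Fin n) ℝ) + s • M⁻¹ - mpow M (-s)).PosSemidef := by
    rw [hdiff, Matrix.star_eq_conjTranspose]
    exact (Matrix.posSemidef_diagonal_iff.mpr hg).mul_mul_conjTranspose_same U
  have hconj : (Q * ((1 - s) • (1 : Matrix (Fin n) (Fin n) ℝ) + s • M⁻¹ - mpow M (-s)) * Q).PosSemidef := by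
    have h := hPSDdiff.mul_mul_conjTranspose_same Q
    rwa [hQH.eq] at h
  have htr : 0 ≤ (Q * ((1 - s) • (1 : Matrix (Fin n) (Fin n) ℝ) + s • M⁻¹ - mpow M (-s)) * Q).trace :=
    trace_nonneg_of_posSemidef hconj
  have hQQ : Q * Q = X⁻¹ := by
    rw [hQdef, mpow_mul_mpow hX, show (-(1 / 2) : ℝ) + -(1 / 2) = -1 by norm_num,
      ← inv_eq_mpow_neg_one hX]
  have hQMQ : Q * M⁻¹ * Q = Y⁻¹ := by
    rw [hMdef, Matrix.mul_inv_rev, Matrix.mul_inv_rev, hQinv]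
    rw [← mul_assoc, ← mul_assoc, hQP, one_mul, mul_assoc, hPQ, mul_one]
  have hexp : Q * ((1 - s) • (1 : Matrix (Fin n) (Fin n) ℝ) + s • M⁻¹ - mpow M (-s)) * Q
      = (1 - s) • X⁻¹ + s • Y⁻¹ - Q * mpow M (-s) * Q := by
    rw [← hQQ, ← hQMQ]
    simp only [Matrix.mul_add, Matrix.add_mul, Matrix.mul_sub, Matrix.sub_mul,
      Matrix.mul_smul, Matrix.smul_mul, Matrix.mul_one]
  rw [hexp] at htr
  rw [Matrix.trace_sub, Matrix.trace_add, Matrix.trace_smul, Matrix.trace_smul] at htr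
  rw [hγinv]
  simp only [smul_eq_mul] at htr
  linarith
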